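/- Let P : ℕ → Prop and let s : ℕ → ℕ → Bool be such that for every i, the sequence s i semidecides P i. Then (∃ n : ℕ, ω · 2 ≤ Ψₙ(s)) if and only if (∃ m : ℕ, P m). -/

import Mathlib

def Semidecides (b : ℕ → Bool) (Q : Prop) : Prop :=
  Q ↔ ∃ j, b j = true

open Classical in
noncomputable def tCount (s : ℕ → ℕ → Bool) (n k : ℕ) : ℕ :=
  ((Finset.range n).filter (fun i => ∃ j ≤ k, s i j = true)).card

noncomputable def psiApprox (s : ℕ → ℕ → Bool) (n : ℕ) : Ordinal :=
  ⨆ k : ℕ, (Ordinal.omega0 * (tCount s n k) + k)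

noncomputable def psi (s : ℕ → ℕ → Bool) : Ordinal :=
  ⨆ n : ℕ, (psiApprox s n + n)

universe u

open Ordinal in
lemma psiApprox_eq_omega0 (s : ℕ → ℕ → Bool) (n : ℕ)
    (ht : ∀ k, tCount s n k = 0) : psiApprox.{u} s n = ω := by
  simp only [psiApprox, ht, Nat.cast_zero, mul_zero, zero_add]
  exact iSup_natCast

open Ordinal in
lemma omega0_two_le_psiApprox (s : ℕ → ℕ → Bool) (m j : ℕ) (hj : s m j = true) :
    Ordinal.omega0.{u} * 2 ≤ psiApprox.{u} s (m + 1) := by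
  have h2 : ω * 2 = ⨆ k : ℕ, (ω + (k : Ordinal.{u})) := by
    rw [iSup_add_natCast, (by norm_num : (2 : Ordinal.{u}) = 1 + 1), mul_add, mul_one]
  rw [h2]
  refine Ordinal.iSup_le fun k => ?_
  have h1 : 1 ≤ tCount s (m + 1) (j + k) := by
    rw [Nat.one_le_iff_ne_zero]
    simp only [tCount, ne_eq, Finset.card_eq_zero, Finset.filter_eq_empty_iff]
    push_neg
    exact ⟨m, Finset.mem_range.2 (lt_add_one m), j, Nat.le_add_right j k, hj⟩
  calc ω + (k : Ordinal.{u}) = ω * 1 + (k : Ordinal.{u}) := by rw [mul_one]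
    _ ≤ ω * (tCount s (m + 1) (j + k)) + ((j + k : ℕ) : Ordinal.{u}) :=
        add_le_add (mul_le_mul_right (by exact_mod_cast h1) ω)
          (by exact_mod_cast Nat.le_add_left k j)
    _ ≤ psiApprox s (m + 1) :=
        Ordinal.le_iSup (fun k : ℕ => ω * (tCount s (m + 1) k : ℕ) + (k : Ordinal.{u})) (j + k)

open Ordinal in
theorem key_lemma (P : ℕ → Prop) (s : ℕ → ℕ → Bool)
    (hs : ∀ i, Semidecides (s i) (P i)) :
    (∃ n : ℕ, Ordinal.omega0 * 2 ≤ psiApprox s n) ↔ (∃ m : ℕ, P m) := by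
  constructor
  · rintro ⟨n, hn⟩
    by_contra h
    push_neg at h
    have ht : ∀ k, tCount s n k = 0 := by
      intro k
      simp only [tCount, Finset.card_eq_zero, Finset.filter_eq_empty_iff]
      rintro i _ ⟨j, _, hj⟩
      exact h i ((hs i).2 ⟨j, hj⟩)
    rw [psiApprox_eq_omega0 s n ht] at hn
    have hlt : ω < ω * 2 := by
      nth_rewrite 1 [← mul_one ω]
      exact (mul_lt_mul_iff_right₀ omega0_pos).2 one_lt_two
    exact absurd hn hlt.not_ge
  · rintro ⟨m, hm⟩
    obtain ⟨j, hj⟩ := (hs m).1 hm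
    exact ⟨m + 1, omega0_two_le_psiApprox s m j hj⟩
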